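/- Let d ≥ 1, let Ω be a bounded open subset of ℝ^d and let K denote the closure of the L^∞ 1-neighborhood of Ω. Let ν = (ν^1,…,ν^d) and, for each n ≥ 1, ν_n = (ν_n^1,…,ν_n^d) be ℝ^d-valued Borel measures supported in K, such that 𝔡(ν_n, ν) → 0 as n → ∞. Suppose there exists C₁ > 0 such that Σ_{i=1}^d |ν_n^i|(K) ≤ C₁ L^d(K) for all n ≥ 1 and Σ_{i=1}^d |ν^i|(K) ≤ C₁ L^d(K), where |ν^i| denotes the total variation measure of the signed measure ν^i. Then ν_n converges weakly to ν: for every bounded continuous f : ℝ^d → ℝ and every i ∈ {1,…,d}, ∫_{ℝ^d} f dν_n^i → ∫_{ℝ^d} f dν^i. -/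

import Mathlib

open MeasureTheory Filter Set
open scoped ENNReal Topology

namespace FPP

/-- `ℝ^d`, with Lebesgue measure `volume`. -/
abbrev Rd (d : ℕ) := Fin d → ℝ

/-- The Euclidean (ℓ²) norm on `Rd d`. -/
noncomputable def nrm2 {d : ℕ} (v : Rd d) : ℝ := Real.sqrt (∑ i, v i ^ 2)

/-- The translated dyadic cube `Q + x`, where `Q ∈ Δ_λ^k` is indexed by `w ∈ ℤ^d`,
`Q = 2^{-k} λ ([-1/2,1/2)^d + w)`. -/
def dyadicCube {d : ℕ} (k : ℕ) (lam : ℝ) (w : Fin d → ℤ) (x : Rd d) : Set (Rd d) :=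
  {y | ∀ i, lam * (2 : ℝ)⁻¹ ^ k * ((w i : ℝ) - 1 / 2) + x i ≤ y i ∧
            y i < lam * (2 : ℝ)⁻¹ ^ k * ((w i : ℝ) + 1 / 2) + x i}

/-- The distance `𝔡` between two `ℝ^d`-valued set functions, with values in `[0,∞]`. -/
noncomputable def ddist {d : ℕ} (ν μ : Set (Rd d) → Rd d) : ℝ≥0∞ :=
  ⨆ (x : Rd d) (_ : ∀ i, -1 ≤ x i ∧ x i < 1) (lam : ℝ) (_ : 1 ≤ lam ∧ lam ≤ 2),
    ∑' k : ℕ, (2 : ℝ≥0∞)⁻¹ ^ k *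
      ∑' w : Fin d → ℤ,
        ENNReal.ofReal (nrm2 (μ (dyadicCube k lam w x) - ν (dyadicCube k lam w x)))

/-- the restriction `ν 𝟙_A` of an `ℝ^d`-valued set function to `A` -/
def restr {d : ℕ} (ν : Set (Rd d) → Rd d) (A : Set (Rd d)) : Set (Rd d) → Rd d :=
  fun S => ν (S ∩ A)

/-- the half-open unit cube `𝔠 = [-1/2, 1/2)^d` -/
def unitCube (d : ℕ) : Set (Rd d) := {y | ∀ i, -(1 / 2 : ℝ) ≤ y i ∧ y i < 1 / 2}

/-- The `ℝ^d`-valued measure `σ ℒ^d` with density `σ` w.r.t. Lebesgue measure,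
as a set function. -/
noncomputable def densMeas {d : ℕ} (σ : Rd d → Rd d) : Set (Rd d) → Rd d :=
  fun A => ∫ y in A, σ y

/-- `K`, the closure of the `L^∞` 1-neighbourhood `V_∞(Ω,1)` of `Ω` -/
def bigK (d : ℕ) (Om : Set (Rd d)) : Set (Rd d) :=
  closure {x | ∃ y ∈ Om, ∀ i, |x i - y i| < 1}

/-- the `i`-th component `ν^i` of an `ℝ^d`-valued vector measure, as a signed measure -/
noncomputable def compMeas {d : ℕ} (ν : VectorMeasure (Rd d) (Rd d)) (i : Fin d) :
    SignedMeasure (Rd d) :=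
  ν.mapRange (Pi.evalAddMonoidHom (fun _ : Fin d => ℝ) i) (continuous_apply i)

/-- the integral `∫ f dν` of a function against a signed measure, through its Jordan
decomposition -/
noncomputable def sint {d : ℕ} (f : Rd d → ℝ) (s : SignedMeasure (Rd d)) : ℝ :=
  (∫ x, f x ∂s.toJordanDecomposition.posPart) - ∫ x, f x ∂s.toJordanDecomposition.negPart

/-! ### Auxiliary material -/

section Aux

variable {d : ℕ}

/-- basic (untranslated, `λ = 1`) dyadic cube -/
def cube (k : ℕ) (w : Fin d → ℤ) : Set (Rd d) := dyadicCube k 1 w 0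

lemma mem_cube {k : ℕ} {w : Fin d → ℤ} {y : Rd d} :
    y ∈ cube k w ↔ ∀ i, (2 : ℝ)⁻¹ ^ k * ((w i : ℝ) - 1 / 2) ≤ y i ∧
      y i < (2 : ℝ)⁻¹ ^ k * ((w i : ℝ) + 1 / 2) := by
  simp [cube, dyadicCube]

lemma cube_measurable (k : ℕ) (w : Fin d → ℤ) : MeasurableSet (cube (d := d) k w) := by
  have : cube k w = ⋂ i, (fun y : Rd d => y i) ⁻¹'
      (Set.Ico ((2 : ℝ)⁻¹ ^ k * ((w i : ℝ) - 1 / 2)) ((2 : ℝ)⁻¹ ^ k * ((w i : ℝ) + 1 / 2))) := by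
    ext y; simp [mem_cube, Set.mem_Ico]
  rw [this]
  exact MeasurableSet.iInter fun i => (measurable_pi_apply i) measurableSet_Ico

/-- index of the cube containing y -/
noncomputable def idx (k : ℕ) (y : Rd d) : Fin d → ℤ := fun i => ⌊(2 : ℝ) ^ k * y i + 1 / 2⌋

lemma pow_inv_pos (k : ℕ) : (0:ℝ) < (2 : ℝ)⁻¹ ^ k := by positivity

lemma mem_cube_idx (k : ℕ) (y : Rd d) : y ∈ cube k (idx k y) := by
  rw [mem_cube]
  intro i
  have h2 : (0:ℝ) < (2:ℝ)^k := by positivity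
  have hmul : (2:ℝ)⁻¹ ^ k * (2:ℝ)^k = 1 := by
    rw [← mul_pow]; norm_num
  have h1 : (⌊(2 : ℝ) ^ k * y i + 1 / 2⌋ : ℝ) ≤ (2 : ℝ) ^ k * y i + 1 / 2 := Int.floor_le _
  have h2' : (2 : ℝ) ^ k * y i + 1 / 2 < (⌊(2 : ℝ) ^ k * y i + 1 / 2⌋ : ℝ) + 1 :=
    Int.lt_floor_add_one _
  constructor
  · have := mul_le_mul_of_nonneg_left
      (by linarith : (⌊(2:ℝ)^k * y i + 1/2⌋ : ℝ) - 1/2 ≤ (2:ℝ)^k * y i)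
      (le_of_lt (pow_inv_pos k))
    calc (2:ℝ)⁻¹ ^ k * ((idx k y i : ℝ) - 1/2) ≤ (2:ℝ)⁻¹^k * ((2:ℝ)^k * y i) := this
    _ = y i := by rw [← mul_assoc, hmul, one_mul]
  · have := mul_lt_mul_of_pos_left
      (by linarith : (2:ℝ)^k * y i < (⌊(2:ℝ)^k * y i + 1/2⌋ : ℝ) + 1/2) (pow_inv_pos k)
    calc y i = (2:ℝ)⁻¹^k * ((2:ℝ)^k * y i) := by rw [← mul_assoc, hmul, one_mul]
    _ < (2:ℝ)⁻¹ ^ k * ((idx k y i : ℝ) + 1/2) := this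

lemma idx_eq_of_mem {k : ℕ} {w : Fin d → ℤ} {y : Rd d} (h : y ∈ cube k w) :
    w = idx k y := by
  rw [mem_cube] at h
  funext i
  obtain ⟨h1, h2⟩ := h i
  have h2k : (0:ℝ) < (2:ℝ)^k := by positivity
  have hmul : (2:ℝ)^k * (2:ℝ)⁻¹ ^ k = 1 := by rw [← mul_pow]; norm_num
  have e1 : (w i : ℝ) ≤ (2:ℝ)^k * y i + 1/2 := by
    have := mul_le_mul_of_nonneg_left h1 (le_of_lt h2k)
    rw [← mul_assoc, hmul, one_mul] at this
    linarith
  have e2 : (2:ℝ)^k * y i + 1/2 < (w i : ℝ) + 1 := by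
    have := mul_lt_mul_of_pos_left h2 h2k
    rw [← mul_assoc, hmul, one_mul] at this
    linarith
  exact ((Int.floor_eq_iff).mpr ⟨e1, e2⟩).symm

lemma cube_disjoint {k : ℕ} {w w' : Fin d → ℤ} (h : w ≠ w') :
    Disjoint (cube k w) (cube (d := d) k w') := by
  rw [Set.disjoint_left]
  intro y hy hy'
  exact h ((idx_eq_of_mem hy).trans (idx_eq_of_mem hy').symm)

lemma dist_le_of_mem_cube {k : ℕ} {w : Fin d → ℤ} {y z : Rd d}
    (hy : y ∈ cube k w) (hz : z ∈ cube k w) : dist y z ≤ (2:ℝ)⁻¹ ^ k := by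
  rw [mem_cube] at hy hz
  rw [dist_pi_le_iff (le_of_lt (pow_inv_pos k))]
  intro i
  obtain ⟨a1, a2⟩ := hy i
  obtain ⟨b1, b2⟩ := hz i
  rw [Real.dist_eq, abs_sub_le_iff]
  constructor <;> nlinarith [pow_inv_pos k]

lemma idx_bound {k : ℕ} {w : Fin d → ℤ} {y : Rd d} {R : ℝ}
    (h : y ∈ cube k w) (hR : ∀ i, |y i| ≤ R) (i : Fin d) :
    |(w i : ℝ)| ≤ (2:ℝ)^k * R + 1 := by
  rw [mem_cube] at h
  obtain ⟨h1, h2⟩ := h i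
  have h2k : (0:ℝ) < (2:ℝ)^k := by positivity
  have hmul : (2:ℝ)^k * (2:ℝ)⁻¹ ^ k = 1 := by rw [← mul_pow]; norm_num
  have e1 := mul_le_mul_of_nonneg_left h1 (le_of_lt h2k)
  have e2 := mul_lt_mul_of_pos_left h2 h2k
  rw [← mul_assoc, hmul, one_mul] at e1 e2
  have hyi := abs_le.1 (hR i)
  have hky : |(2:ℝ)^k * y i| ≤ (2:ℝ)^k * R := by
    rw [abs_mul, abs_of_pos h2k]
    exact mul_le_mul_of_nonneg_left (hR i) (le_of_lt h2k)
  have := abs_le.1 hky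
  rw [abs_le]
  constructor <;> nlinarith

lemma nrm2_nonneg (v : Rd d) : 0 ≤ nrm2 v := Real.sqrt_nonneg _

lemma abs_le_nrm2 (v : Rd d) (i : Fin d) : |v i| ≤ nrm2 v := by
  rw [← Real.sqrt_sq_eq_abs]
  exact Real.sqrt_le_sqrt (Finset.single_le_sum (fun j _ => sq_nonneg (v j)) (Finset.mem_univ i))

lemma nrm2_neg_sub (a b : Rd d) : nrm2 (a - b) = nrm2 (b - a) := by
  unfold nrm2
  congr 1
  refine Finset.sum_congr rfl fun j _ => ?_
  have : (a - b) j = -((b - a) j) := by simp [Pi.sub_apply]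
  rw [this, neg_pow_two]

/-- Per-cube convergence from convergence in `ddist`. -/
lemma cube_tendsto (ν : VectorMeasure (Rd d) (Rd d)) (νseq : ℕ → VectorMeasure (Rd d) (Rd d))
    (hconv : Filter.Tendsto (fun n => ddist (fun A => νseq n A) (fun A => ν A))
      Filter.atTop (nhds 0))
    (k : ℕ) (w : Fin d → ℤ) (i : Fin d) :
    Filter.Tendsto (fun n => (νseq n (cube k w)) i) Filter.atTop (nhds ((ν (cube k w)) i)) := by
  set r : ℕ → ℝ := fun n => nrm2 (ν (cube k w) - νseq n (cube k w)) with hr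
  have hbound : ∀ n, (2 : ℝ≥0∞)⁻¹ ^ k * ENNReal.ofReal (r n)
      ≤ ddist (fun A => νseq n A) (fun A => ν A) := by
    intro n
    have hx : ∀ j : Fin d, -1 ≤ (0 : Rd d) j ∧ (0 : Rd d) j < 1 := by
      intro j; simp
    have hlam : (1:ℝ) ≤ 1 ∧ (1:ℝ) ≤ 2 := ⟨le_refl _, one_le_two⟩
    refine le_trans ?_ (le_iSup_of_le (0 : Rd d) (le_iSup_of_le hx
      (le_iSup_of_le (1:ℝ) (le_iSup_of_le hlam le_rfl))))
    refine le_trans ?_ (ENNReal.le_tsum k)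
    refine mul_le_mul_right ?_ _
    exact le_trans (le_of_eq rfl) (ENNReal.le_tsum w)
  have hmul : (2 : ℝ≥0∞) ^ k * (2 : ℝ≥0∞)⁻¹ ^ k = 1 := by
    rw [← mul_pow, ENNReal.mul_inv_cancel (by norm_num) (by norm_num), one_pow]
  have hb2 : ∀ n, ENNReal.ofReal (r n)
      ≤ (2:ℝ≥0∞)^k * ddist (fun A => νseq n A) (fun A => ν A) := by
    intro n
    calc ENNReal.ofReal (r n) = (2:ℝ≥0∞)^k * ((2:ℝ≥0∞)⁻¹^k * ENNReal.ofReal (r n)) := by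
          rw [← mul_assoc, hmul, one_mul]
    _ ≤ _ := mul_le_mul_right (hbound n) _
  have hto : Filter.Tendsto (fun n => (2:ℝ≥0∞)^k * ddist (fun A => νseq n A) (fun A => ν A))
      Filter.atTop (nhds 0) := by
    have := ENNReal.Tendsto.const_mul hconv (Or.inr (by simp : (2:ℝ≥0∞)^k ≠ ⊤))
    simpa using this
  have hofr : Filter.Tendsto (fun n => ENNReal.ofReal (r n)) Filter.atTop (nhds 0) :=
    tendsto_of_tendsto_of_tendsto_of_le_of_le tendsto_const_nhds hto
      (fun n => zero_le) hb2
  have hrto : Filter.Tendsto r Filter.atTop (nhds 0) := by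
    have h1 : Filter.Tendsto (fun n => (ENNReal.ofReal (r n)).toReal) Filter.atTop (nhds 0) := by
      have := (ENNReal.tendsto_toReal (by norm_num : (0:ℝ≥0∞) ≠ ⊤)).comp hofr
      simpa [Function.comp_def] using this
    have : (fun n => (ENNReal.ofReal (r n)).toReal) = r := by
      funext n; exact ENNReal.toReal_ofReal (nrm2_nonneg _)
    rwa [this] at h1
  have hdiff : Filter.Tendsto (fun n => (νseq n (cube k w)) i - (ν (cube k w)) i)
      Filter.atTop (nhds 0) := by
    refine squeeze_zero_norm (fun n => ?_) hrto
    have : (νseq n (cube k w)) i - (ν (cube k w)) i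
        = (νseq n (cube k w) - ν (cube (d := d) k w)) i := by simp [Pi.sub_apply]
    rw [Real.norm_eq_abs, this]
    calc |(νseq n (cube k w) - ν (cube (d := d) k w)) i|
        ≤ nrm2 (νseq n (cube k w) - ν (cube (d := d) k w)) := abs_le_nrm2 _ i
    _ = r n := nrm2_neg_sub _ _
  have := hdiff.add_const ((ν (cube (d := d) k w)) i)
  simpa using this

/-- value of a signed measure through its Jordan decomposition -/
lemma sm_apply (s : SignedMeasure (Rd d)) (A : Set (Rd d)) (hA : MeasurableSet A) :
    s A = (s.toJordanDecomposition.posPart A).toReal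
      - (s.toJordanDecomposition.negPart A).toReal := by
  conv_lhs => rw [← s.toSignedMeasure_toJordanDecomposition]
  rw [JordanDecomposition.toSignedMeasure, VectorMeasure.sub_apply,
    Measure.toSignedMeasure_apply_measurable hA, Measure.toSignedMeasure_apply_measurable hA]
  rfl

/-- Jordan decomposition parts of a signed measure supported in `K` vanish
on measurable sets disjoint from `K`. -/
lemma jordan_null (s : SignedMeasure (Rd d)) (K : Set (Rd d))
    (h : ∀ A : Set (Rd d), MeasurableSet A → A ∩ K = ∅ → s A = 0)
    (A : Set (Rd d)) (hA : MeasurableSet A) (hAK : A ∩ K = ∅) :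
    s.toJordanDecomposition.posPart A = 0 ∧ s.toJordanDecomposition.negPart A = 0 := by
  obtain ⟨i, hi₁, hi₂, hi₃, hpos, hneg⟩ := s.toJordanDecomposition_spec
  constructor
  · rw [hpos, SignedMeasure.toMeasureOfZeroLE_apply _ hi₂ hi₁ hA]
    have : s (i ∩ A) = 0 := h _ (hi₁.inter hA)
      (by rw [Set.inter_assoc, hAK, Set.inter_empty])
    simp [this]
  · rw [hneg, SignedMeasure.toMeasureOfLEZero_apply _ hi₃ hi₁.compl hA]
    have : s (iᶜ ∩ A) = 0 := h _ (hi₁.compl.inter hA)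
      (by rw [Set.inter_assoc, hAK, Set.inter_empty])
    simp [this]

/-- main approximation estimate for a finite (nonnegative) measure -/
lemma int_approx (μ : Measure (Rd d)) [IsFiniteMeasure μ] (K : Set (Rd d))
    (hμK : μ Kᶜ = 0)
    (f : Rd d → ℝ) (hf : Continuous f) (B : ℝ) (hB : ∀ x, |f x| ≤ B)
    (k : ℕ) (W : Finset (Fin d → ℤ)) (hcover : K ⊆ ⋃ w ∈ W, cube k w)
    (p : (Fin d → ℤ) → Rd d) (hp : ∀ w, (cube k w ∩ K).Nonempty → p w ∈ cube (d := d) k w ∩ K)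
    (δ : ℝ) (hδ0 : 0 ≤ δ)
    (hδ : ∀ w : Fin d → ℤ, ∀ y ∈ cube k w ∩ K, ∀ z ∈ cube (d := d) k w ∩ K, |f y - f z| ≤ δ) :
    |(∫ x, f x ∂μ) - ∑ w ∈ W, f (p w) * (μ (cube k w)).toReal| ≤ δ * (μ Set.univ).toReal := by
  have hint : Integrable f μ := by
    refine Integrable.mono' (integrable_const B) hf.aestronglyMeasurable ?_
    filter_upwards with x
    simpa [Real.norm_eq_abs] using hB x
  have hUc : μ (⋃ w ∈ W, cube (d := d) k w)ᶜ = 0 :=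
    measure_mono_null (Set.compl_subset_compl.2 hcover) hμK
  have hU : μ.restrict (⋃ w ∈ W, cube (d := d) k w) = μ := by
    rw [Measure.restrict_congr_set (MeasureTheory.ae_eq_univ.2 hUc), Measure.restrict_univ]
  have hsplit : (∫ x, f x ∂μ) = ∑ w ∈ W, ∫ x in cube k w, f x ∂μ := by
    rw [← integral_biUnion_finset W (fun w _ => cube_measurable k w)
      (fun w _ w' _ hne => cube_disjoint hne) (fun w _ => hint.integrableOn)]
    rw [hU]
  rw [hsplit, ← Finset.sum_sub_distrib]
  refine (Finset.abs_sum_le_sum_abs _ _).trans ?_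
  have hterm : ∀ w ∈ W, |(∫ x in cube k w, f x ∂μ) - f (p w) * (μ (cube (d := d) k w)).toReal|
      ≤ δ * (μ (cube (d := d) k w)).toReal := by
    intro w _
    by_cases hne : (cube (d := d) k w ∩ K).Nonempty
    · have hres : μ.restrict (cube (d := d) k w) = μ.restrict (cube (d := d) k w ∩ K) := by
        refine Measure.restrict_congr_set (MeasureTheory.ae_eq_set.2 ⟨?_, ?_⟩)
        · refine measure_mono_null (fun x hx (h : x ∈ K) => hx.2 ⟨hx.1, h⟩) hμK
        · simpa using measure_mono_null (fun x (hx : x ∈ (cube (d := d) k w ∩ K) \ cube k w) =>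
            (hx.2 hx.1.1).elim) (measure_empty (μ := μ))
      have hQeq : μ (cube (d := d) k w) = μ (cube (d := d) k w ∩ K) := by
        have := congrArg (fun m : Measure (Rd d) => m Set.univ) hres
        simpa [Measure.restrict_apply_univ] using this
      have hpw := hp w hne
      have key : |(∫ x in cube (d := d) k w ∩ K, (f x - f (p w)) ∂μ)|
          ≤ δ * (μ (cube (d := d) k w ∩ K)).toReal := by
        have := norm_setIntegral_le_of_norm_le_const (μ := μ)
          (s := cube (d := d) k w ∩ K) (f := fun x => f x - f (p w)) (C := δ)
          (measure_lt_top _ _)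
          (fun x hx => by simpa [Real.norm_eq_abs] using hδ w x hx (p w) hpw)
        simpa [Real.norm_eq_abs, Measure.real] using this
      have hsub : (∫ x in cube (d := d) k w ∩ K, (f x - f (p w)) ∂μ)
          = (∫ x in cube (d := d) k w ∩ K, f x ∂μ)
            - f (p w) * (μ (cube (d := d) k w ∩ K)).toReal := by
        rw [integral_sub hint.integrableOn (integrableOn_const (measure_ne_top _ _))]
        rw [setIntegral_const]
        ring_nf
        simp [mul_comm, Measure.real]
      rw [show (∫ x in cube (d := d) k w, f x ∂μ)
        = ∫ x in cube (d := d) k w ∩ K, f x ∂μ by rw [hres]]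
      rw [hQeq]
      rw [← hsub] at *
      exact key
    · have h0 : μ (cube (d := d) k w) = 0 := by
        refine measure_mono_null (fun x hx => ?_) hμK
        intro hxK
        exact hne ⟨x, hx, hxK⟩
      have : μ.restrict (cube (d := d) k w) = 0 := Measure.restrict_eq_zero.2 h0
      simp [this, h0, hδ0]
  refine (Finset.sum_le_sum hterm).trans ?_
  rw [← Finset.mul_sum]
  refine mul_le_mul_of_nonneg_left ?_ hδ0
  have h1 : ∑ w ∈ W, (μ (cube (d := d) k w)).toReal
      = (∑ w ∈ W, μ (cube (d := d) k w)).toReal := by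
    rw [ENNReal.toReal_sum (fun w _ => measure_ne_top _ _)]
  rw [h1, ← measure_biUnion_finset (fun w _ w' _ hne => cube_disjoint hne)
    (fun w _ => cube_measurable k w)]
  exact ENNReal.toReal_mono (measure_ne_top _ _) (measure_mono (Set.subset_univ _))

/-- main approximation estimate for a signed measure supported in `K` -/
lemma sint_approx (s : SignedMeasure (Rd d)) (K : Set (Rd d)) (hKm : MeasurableSet K)
    (hsupp : ∀ A : Set (Rd d), MeasurableSet A → A ∩ K = ∅ → s A = 0)
    (f : Rd d → ℝ) (hf : Continuous f) (B : ℝ) (hB : ∀ x, |f x| ≤ B)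
    (k : ℕ) (W : Finset (Fin d → ℤ)) (hcover : K ⊆ ⋃ w ∈ W, cube k w)
    (p : (Fin d → ℤ) → Rd d) (hp : ∀ w, (cube k w ∩ K).Nonempty → p w ∈ cube (d := d) k w ∩ K)
    (δ : ℝ) (hδ0 : 0 ≤ δ)
    (hδ : ∀ w : Fin d → ℤ, ∀ y ∈ cube k w ∩ K, ∀ z ∈ cube (d := d) k w ∩ K, |f y - f z| ≤ δ) :
    |sint f s - ∑ w ∈ W, f (p w) * s (cube k w)| ≤ δ * (s.totalVariation K).toReal := by
  set P := s.toJordanDecomposition.posPart with hP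
  set N := s.toJordanDecomposition.negPart with hN
  have hPc : P Kᶜ = 0 :=
    (jordan_null s K hsupp Kᶜ hKm.compl (by rw [Set.compl_inter_self])).1
  have hNc : N Kᶜ = 0 :=
    (jordan_null s K hsupp Kᶜ hKm.compl (by rw [Set.compl_inter_self])).2
  have hPa := int_approx P K hPc f hf B hB k W hcover p hp δ hδ0 hδ
  have hNa := int_approx N K hNc f hf B hB k W hcover p hp δ hδ0 hδ
  have hsum : ∑ w ∈ W, f (p w) * s (cube k w)
      = (∑ w ∈ W, f (p w) * (P (cube k w)).toReal)
        - ∑ w ∈ W, f (p w) * (N (cube k w)).toReal := by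
    rw [← Finset.sum_sub_distrib]
    refine Finset.sum_congr rfl fun w _ => ?_
    rw [sm_apply s _ (cube_measurable k w)]
    ring
  have hPuniv : P Set.univ = P K := by
    rw [← Set.union_compl_self K, measure_union disjoint_compl_right hKm.compl, hPc, add_zero]
  have hNuniv : N Set.univ = N K := by
    rw [← Set.union_compl_self K, measure_union disjoint_compl_right hKm.compl, hNc, add_zero]
  have htv : (s.totalVariation K).toReal = (P K).toReal + (N K).toReal := by
    rw [SignedMeasure.totalVariation, Measure.add_apply,
      ENNReal.toReal_add (measure_ne_top _ _) (measure_ne_top _ _)]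
  have step : |sint f s - ∑ w ∈ W, f (p w) * s (cube k w)|
      ≤ |(∫ x, f x ∂P) - ∑ w ∈ W, f (p w) * (P (cube k w)).toReal|
        + |(∫ x, f x ∂N) - ∑ w ∈ W, f (p w) * (N (cube k w)).toReal| := by
    rw [hsum, sint]
    have : (∫ x, f x ∂P) - (∫ x, f x ∂N)
        - ((∑ w ∈ W, f (p w) * (P (cube k w)).toReal)
          - ∑ w ∈ W, f (p w) * (N (cube k w)).toReal)
        = ((∫ x, f x ∂P) - ∑ w ∈ W, f (p w) * (P (cube k w)).toReal)
          - ((∫ x, f x ∂N) - ∑ w ∈ W, f (p w) * (N (cube k w)).toReal) := by ring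
    rw [this]
    exact abs_sub _ _
  refine step.trans ?_
  calc _ ≤ δ * (P Set.univ).toReal + δ * (N Set.univ).toReal := add_le_add hPa hNa
  _ = δ * (s.totalVariation K).toReal := by
      rw [hPuniv, hNuniv, htv]; ring

lemma compMeas_apply (ν : VectorMeasure (Rd d) (Rd d)) (i : Fin d) (A : Set (Rd d)) :
    compMeas ν i A = ν A i :=
  VectorMeasure.mapRange_apply _ _

end Aux

/-- Lemma 2.1.  Convergence in the distance `𝔡` of `ℝ^d`-valued measures
supported in `K = closure V_∞(Ω,1)`, uniformly bounded in total variation norm, implies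
weak convergence. -/
theorem statement9
    (d : ℕ) (hd : 1 ≤ d)
    (Om : Set (Rd d)) (hOopen : IsOpen Om) (hObd : Bornology.IsBounded Om)
    (ν : VectorMeasure (Rd d) (Rd d)) (νseq : ℕ → VectorMeasure (Rd d) (Rd d))
    (hsupp : ∀ A : Set (Rd d), MeasurableSet A → A ∩ bigK d Om = ∅ → ν A = 0)
    (hsuppn : ∀ n, ∀ A : Set (Rd d), MeasurableSet A → A ∩ bigK d Om = ∅ → νseq n A = 0)
    (hconv : Filter.Tendsto (fun n => ddist (fun A => νseq n A) (fun A => ν A))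
      Filter.atTop (nhds 0))
    (C₁ : ℝ) (hC₁ : 0 < C₁)
    (hTVn : ∀ n, (∑ i : Fin d, (compMeas (νseq n) i).totalVariation (bigK d Om))
      ≤ ENNReal.ofReal C₁ * volume (bigK d Om))
    (hTV : (∑ i : Fin d, (compMeas ν i).totalVariation (bigK d Om))
      ≤ ENNReal.ofReal C₁ * volume (bigK d Om)) :
    ∀ f : Rd d → ℝ, Continuous f → (∃ B : ℝ, ∀ x, |f x| ≤ B) →
      ∀ i : Fin d,
        Filter.Tendsto (fun n => sint f (compMeas (νseq n) i)) Filter.atTop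
          (nhds (sint f (compMeas ν i))) := by
  intro f hf hBex i
  obtain ⟨B, hB⟩ := hBex
  set K := bigK d Om with hKdef
  have hKclosed : IsClosed K := isClosed_closure
  have hKm : MeasurableSet K := hKclosed.measurableSet
  -- K is bounded, hence compact
  have hNK : {x : Rd d | ∃ y ∈ Om, ∀ i, |x i - y i| < 1} ⊆ Metric.cthickening 1 Om := by
    rintro x ⟨y, hy, hxy⟩
    refine Metric.mem_cthickening_of_dist_le x y 1 Om hy ?_
    rw [dist_pi_le_iff (by norm_num : (0:ℝ) ≤ 1)]
    intro j
    rw [Real.dist_eq]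
    exact (hxy j).le
  have hKsub : K ⊆ Metric.cthickening 1 Om :=
    closure_minimal hNK Metric.isClosed_cthickening
  have hKbdd : Bornology.IsBounded K := (hObd.cthickening).subset hKsub
  have hKcomp : IsCompact K := Metric.isCompact_of_isClosed_isBounded hKclosed hKbdd
  have hvol : volume K ≠ ⊤ := hKcomp.measure_lt_top.ne
  have hTne : (ENNReal.ofReal C₁ * volume K) ≠ ⊤ :=
    ENNReal.mul_ne_top ENNReal.ofReal_ne_top hvol
  set M : ℝ := (ENNReal.ofReal C₁ * volume K).toReal with hM
  have hM0 : 0 ≤ M := ENNReal.toReal_nonneg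
  -- component support
  have hs_supp : ∀ A : Set (Rd d), MeasurableSet A → A ∩ K = ∅ → compMeas ν i A = 0 := by
    intro A hA hAK
    rw [compMeas_apply, hsupp A hA hAK]
    rfl
  have hsn_supp : ∀ n, ∀ A : Set (Rd d), MeasurableSet A → A ∩ K = ∅ →
      compMeas (νseq n) i A = 0 := by
    intro n A hA hAK
    rw [compMeas_apply, hsuppn n A hA hAK]
    rfl
  -- total variation bounds
  have htv : (compMeas ν i).totalVariation K ≤ ENNReal.ofReal C₁ * volume K :=
    le_trans (Finset.single_le_sum
      (f := fun j : Fin d => (compMeas ν j).totalVariation K)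
      (fun j _ => zero_le) (Finset.mem_univ i)) hTV
  have htvn : ∀ n, (compMeas (νseq n) i).totalVariation K ≤ ENNReal.ofReal C₁ * volume K :=
    fun n => le_trans (Finset.single_le_sum
      (f := fun j : Fin d => (compMeas (νseq n) j).totalVariation K)
      (fun j _ => zero_le) (Finset.mem_univ i)) (hTVn n)
  have htvM : ((compMeas ν i).totalVariation K).toReal ≤ M :=
    ENNReal.toReal_mono hTne htv
  have htvnM : ∀ n, ((compMeas (νseq n) i).totalVariation K).toReal ≤ M :=
    fun n => ENNReal.toReal_mono hTne (htvn n)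
  -- the ε-argument
  rw [Metric.tendsto_atTop]
  intro ε hε
  set δ : ℝ := ε / (4 * (M + 1)) with hδdef
  have hM1 : (0:ℝ) < M + 1 := by linarith
  have hδpos : 0 < δ := by
    apply div_pos hε
    linarith
  have hδM : δ * M ≤ ε / 4 := by
    rw [hδdef, div_mul_eq_mul_div, div_le_div_iff₀ (by linarith) (by norm_num)]
    nlinarith
  -- uniform continuity on K
  have hUC : UniformContinuousOn f K :=
    hKcomp.uniformContinuousOn_of_continuous hf.continuousOn
  obtain ⟨η, hη, hηd⟩ := Metric.uniformContinuousOn_iff.1 hUC δ hδpos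
  obtain ⟨k, hk⟩ := exists_pow_lt_of_lt_one hη (by norm_num : (2:ℝ)⁻¹ < 1)
  have hδfun : ∀ w : Fin d → ℤ, ∀ y ∈ cube k w ∩ K, ∀ z ∈ cube (d := d) k w ∩ K,
      |f y - f z| ≤ δ := by
    intro w y hy z hz
    have hdist : dist y z < η := lt_of_le_of_lt (dist_le_of_mem_cube hy.1 hz.1) hk
    have := hηd y hy.2 z hz.2 hdist
    rw [Real.dist_eq] at this
    exact this.le
  -- the finite set of cubes meeting K
  obtain ⟨R, hR⟩ := isBounded_iff_forall_norm_le.1 hKbdd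
  have hRco : ∀ y ∈ K, ∀ j : Fin d, |y j| ≤ R := by
    intro y hy j
    have := norm_le_pi_norm y j
    rw [Real.norm_eq_abs] at this
    exact this.trans (hR y hy)
  set Mz : ℤ := ⌈(2:ℝ)^k * R + 1⌉ with hMz
  have hfin : {w : Fin d → ℤ | (cube (d := d) k w ∩ K).Nonempty}.Finite := by
    refine Set.Finite.subset (Set.Finite.pi (fun _ : Fin d => Set.finite_Icc (-Mz) Mz)) ?_
    rintro w ⟨y, hy⟩
    rw [Set.mem_univ_pi]
    intro j
    have hb := idx_bound hy.1 (fun j' => hRco y hy.2 j') j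
    obtain ⟨hb1, hb2⟩ := abs_le.1 hb
    have hceil : (2:ℝ)^k * R + 1 ≤ (Mz : ℝ) := Int.le_ceil _
    rw [Set.mem_Icc]
    constructor
    · have : (-Mz : ℝ) ≤ (w j : ℝ) := by push_cast; linarith
      exact_mod_cast this
    · have : (w j : ℝ) ≤ (Mz : ℝ) := by linarith
      exact_mod_cast this
  set W : Finset (Fin d → ℤ) := hfin.toFinset with hW
  have hcover : K ⊆ ⋃ w ∈ W, cube k w := by
    intro y hy
    have hmem : idx k y ∈ W := hfin.mem_toFinset.2 ⟨y, mem_cube_idx k y, hy⟩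
    exact Set.mem_biUnion hmem (mem_cube_idx k y)
  classical
  set p : (Fin d → ℤ) → Rd d := fun w =>
    if h : (cube (d := d) k w ∩ K).Nonempty then h.choose else 0 with hpdef
  have hp : ∀ w, (cube (d := d) k w ∩ K).Nonempty → p w ∈ cube (d := d) k w ∩ K := by
    intro w h
    rw [hpdef]
    simp only [dif_pos h]
    exact h.choose_spec
  -- the approximating sums and their convergence
  set A : ℝ := ∑ w ∈ W, f (p w) * (compMeas ν i) (cube k w) with hA
  have hAtend : Filter.Tendsto (fun n => ∑ w ∈ W, f (p w) * (compMeas (νseq n) i) (cube k w))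
      Filter.atTop (nhds A) := by
    rw [hA]
    refine tendsto_finset_sum _ fun w _ => ?_
    have h1 : Filter.Tendsto (fun n => (νseq n (cube k w)) i) Filter.atTop
        (nhds ((ν (cube k w)) i)) := cube_tendsto ν νseq hconv k w i
    have h2 : Filter.Tendsto (fun n => f (p w) * (νseq n (cube k w)) i) Filter.atTop
        (nhds (f (p w) * (ν (cube k w)) i)) := h1.const_mul _
    simpa only [compMeas_apply] using h2
  obtain ⟨N₀, hN₀⟩ := Metric.tendsto_atTop.1 hAtend (ε / 2) (by linarith)
  refine ⟨N₀, fun n hn => ?_⟩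
  have happroxn := sint_approx (compMeas (νseq n) i) K hKm (hsn_supp n) f hf B hB
    k W hcover p hp δ hδpos.le hδfun
  have happrox := sint_approx (compMeas ν i) K hKm hs_supp f hf B hB
    k W hcover p hp δ hδpos.le hδfun
  have hbn : |sint f (compMeas (νseq n) i)
      - ∑ w ∈ W, f (p w) * (compMeas (νseq n) i) (cube k w)| ≤ ε / 4 := by
    refine happroxn.trans ?_
    calc δ * ((compMeas (νseq n) i).totalVariation K).toReal ≤ δ * M :=
          mul_le_mul_of_nonneg_left (htvnM n) hδpos.le
    _ ≤ ε / 4 := hδM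
  have hb : |sint f (compMeas ν i) - A| ≤ ε / 4 := by
    refine happrox.trans ?_
    calc δ * ((compMeas ν i).totalVariation K).toReal ≤ δ * M :=
          mul_le_mul_of_nonneg_left htvM hδpos.le
    _ ≤ ε / 4 := hδM
  have hmid : |(∑ w ∈ W, f (p w) * (compMeas (νseq n) i) (cube k w)) - A| < ε / 2 := by
    have := hN₀ n hn
    rwa [Real.dist_eq] at this
  rw [Real.dist_eq]
  have tri : |sint f (compMeas (νseq n) i) - sint f (compMeas ν i)|
      ≤ |sint f (compMeas (νseq n) i)
          - ∑ w ∈ W, f (p w) * (compMeas (νseq n) i) (cube k w)|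
        + |(∑ w ∈ W, f (p w) * (compMeas (νseq n) i) (cube k w)) - A|
        + |A - sint f (compMeas ν i)| := by
    have h1 := abs_sub_le (sint f (compMeas (νseq n) i))
      (∑ w ∈ W, f (p w) * (compMeas (νseq n) i) (cube k w)) (sint f (compMeas ν i))
    have h2 := abs_sub_le (∑ w ∈ W, f (p w) * (compMeas (νseq n) i) (cube k w))
      A (sint f (compMeas ν i))
    linarith
  have hb' : |A - sint f (compMeas ν i)| ≤ ε / 4 := by
    rw [abs_sub_comm]; exact hb
  linarith

end FPP
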